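/- Fix b ≥ 1, let 𝒰 be a non-principal ultrafilter on the set ℙ of primes, let R = ∏_{p∈ℙ} ℤ/p^bℤ / 𝒰, and let π ∈ R be the class of the sequence (p mod p^b)_{p∈ℙ}. Then for every 0 ≤ i ≤ b, the annihilator {x ∈ R : π^i x = 0} of π^i in R equals the principal ideal π^{b−i}R. -/

import Mathlib

open FirstOrder Filter

/-- The congruence on the product ring identifying two sequences when they agree
on a set in the ultrafilter `𝒰`. -/
def ultraRingCon {I : Type*} (𝒰 : Ultrafilter I) (R : I → Type*) [∀ i, CommRing (R i)] :
    RingCon (∀ i, R i) where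
  r f g := ∀ᶠ i in (𝒰 : Filter I), f i = g i
  iseqv :=
    ⟨fun _ => Eventually.of_forall fun _ => rfl,
     fun h => h.mono fun _ e => e.symm,
     fun h₁ h₂ => h₂.mp (h₁.mono fun _ e₁ e₂ => e₁.trans e₂)⟩
  mul' := fun h₁ h₂ => h₂.mp (h₁.mono fun i e₁ e₂ => by
    simp only [Pi.mul_apply, e₁, e₂])
  add' := fun h₁ h₂ => h₂.mp (h₁.mono fun i e₁ e₂ => by
    simp only [Pi.add_apply, e₁, e₂])

/-- The ultraproduct `∏_{i ∈ I} R i / 𝒰` of the family of rings `R`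
with respect to the ultrafilter `𝒰`. -/
def UltraProd {I : Type*} (𝒰 : Ultrafilter I) (R : I → Type*) [∀ i, CommRing (R i)] : Type _ :=
  (ultraRingCon 𝒰 R).Quotient

instance {I : Type*} (𝒰 : Ultrafilter I) (R : I → Type*) [∀ i, CommRing (R i)] :
    CommRing (UltraProd 𝒰 R) :=
  inferInstanceAs (CommRing (ultraRingCon 𝒰 R).Quotient)

/-- The class of a sequence in the ultraproduct. -/
def UltraProd.mk {I : Type*} (𝒰 : Ultrafilter I) (R : I → Type*) [∀ i, CommRing (R i)]
    (f : ∀ i, R i) : UltraProd 𝒰 R :=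
  (ultraRingCon 𝒰 R).mk' f

lemma zmod_key (p b i : ℕ) (hp : p.Prime) (hi : i ≤ b) (x : ZMod (p ^ b)) :
    (p : ZMod (p ^ b)) ^ i * x = 0 ↔ ∃ y : ZMod (p ^ b), x = (p : ZMod (p ^ b)) ^ (b - i) * y := by
  have : NeZero (p ^ b) := ⟨pow_ne_zero _ hp.pos.ne'⟩
  constructor
  · intro h
    have hx : ((p ^ i * x.val : ℕ) : ZMod (p ^ b)) = 0 := by
      push_cast
      rwa [ZMod.natCast_val, ZMod.cast_id]
    rw [ZMod.natCast_eq_zero_iff] at hx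
    have hb' : p ^ b = p ^ i * p ^ (b - i) := by
      rw [← pow_add, Nat.add_sub_cancel' hi]
    obtain ⟨k, hk⟩ := hx
    have hc : x.val = p ^ (b - i) * k := by
      have h2 : p ^ i * x.val = p ^ i * (p ^ (b - i) * k) := by
        rw [hk, hb']; ring
      exact Nat.eq_of_mul_eq_mul_left (Nat.pow_pos (n := i) hp.pos) h2
    refine ⟨(k : ZMod (p ^ b)), ?_⟩
    have : x = ((x.val : ℕ) : ZMod (p ^ b)) := by rw [ZMod.natCast_val, ZMod.cast_id]
    rw [this, hc]; push_cast; ring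
  · rintro ⟨y, rfl⟩
    rw [← mul_assoc, ← pow_add, Nat.add_sub_cancel' hi, ← Nat.cast_pow, ZMod.natCast_self,
      zero_mul]

lemma UltraProd.mk_eq_mk {I : Type*} (𝒰 : Ultrafilter I) (R : I → Type*) [∀ i, CommRing (R i)]
    (f g : ∀ i, R i) :
    UltraProd.mk 𝒰 R f = UltraProd.mk 𝒰 R g ↔ ∀ᶠ i in (𝒰 : Filter I), f i = g i :=
  Con.eq _

lemma UltraProd.mk_pow_mul {I : Type*} (𝒰 : Ultrafilter I) (R : I → Type*) [∀ i, CommRing (R i)]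
    (a g : ∀ i, R i) (j : ℕ) :
    (UltraProd.mk 𝒰 R a) ^ j * UltraProd.mk 𝒰 R g
      = UltraProd.mk 𝒰 R (fun p => a p ^ j * g p) := by
  unfold UltraProd.mk
  have h1 : ((ultraRingCon 𝒰 R).mk' a : UltraProd 𝒰 R) ^ j
      = ((ultraRingCon 𝒰 R).mk' (a ^ j) : UltraProd 𝒰 R) := (map_pow _ _ _).symm
  erw [h1, show ((ultraRingCon 𝒰 R).mk' (a ^ j) : UltraProd 𝒰 R) * (ultraRingCon 𝒰 R).mk' g
      = (ultraRingCon 𝒰 R).mk' (a ^ j * g) from (map_mul _ _ _).symm]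
  rfl

/-- Fix `b ≥ 1`, let `𝒰` be a non-principal ultrafilter on the set `ℙ` of primes, let
`R = ∏_{p ∈ ℙ} ℤ/p^bℤ / 𝒰`, and let `π ∈ R` be the class of the sequence `(p mod p^b)_p`.
Then for every `0 ≤ i ≤ b`, the annihilator of `π^i` in `R` equals the principal ideal
`π^(b-i) R`. -/
theorem ultraproduct_annihilator_pow_pi (b : ℕ) (hb : 1 ≤ b)
    (𝒰 : Ultrafilter {p : ℕ // p.Prime})
    (hfree : ∀ p : {p : ℕ // p.Prime}, 𝒰 ≠ pure p)
    (π : UltraProd 𝒰 fun p : {p : ℕ // p.Prime} => ZMod (p.1 ^ b))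
    (hπ : π = UltraProd.mk 𝒰 _ fun p : {p : ℕ // p.Prime} => (p.1 : ZMod (p.1 ^ b)))
    (i : ℕ) (hi : i ≤ b) :
    ∀ x : UltraProd 𝒰 fun p : {p : ℕ // p.Prime} => ZMod (p.1 ^ b),
      π ^ i * x = 0 ↔ ∃ y, x = π ^ (b - i) * y := by
  subst hπ
  intro x
  obtain ⟨f, hf⟩ := (ultraRingCon 𝒰 fun p : {p : ℕ // p.Prime} => ZMod (p.1 ^ b)).mk'_surjective x
  have hfx : x = UltraProd.mk 𝒰 _ f := hf.symm
  subst hfx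
  have hzero : (0 : UltraProd 𝒰 fun p : {p : ℕ // p.Prime} => ZMod (p.1 ^ b))
      = UltraProd.mk 𝒰 _ 0 := rfl
  constructor
  · intro h
    rw [UltraProd.mk_pow_mul, hzero, UltraProd.mk_eq_mk] at h
    simp only [Pi.zero_apply] at h
    classical
    refine ⟨UltraProd.mk 𝒰 _ (fun p => if hz : (p.1 : ZMod (p.1 ^ b)) ^ i * f p = 0 then
      ((zmod_key p.1 b i p.2 hi (f p)).mp hz).choose else 0), ?_⟩
    rw [UltraProd.mk_pow_mul, UltraProd.mk_eq_mk]
    refine h.mono fun p hz => ?_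
    rw [dif_pos hz]
    exact ((zmod_key p.1 b i p.2 hi (f p)).mp hz).choose_spec
  · rintro ⟨y, hy⟩
    obtain ⟨g, hg⟩ :=
      (ultraRingCon 𝒰 fun p : {p : ℕ // p.Prime} => ZMod (p.1 ^ b)).mk'_surjective y
    have hgy : y = UltraProd.mk 𝒰 _ g := hg.symm
    subst hgy
    rw [UltraProd.mk_pow_mul, UltraProd.mk_eq_mk] at hy
    rw [UltraProd.mk_pow_mul, hzero, UltraProd.mk_eq_mk]
    refine hy.mono fun p hp => ?_
    show (p.1 : ZMod (p.1 ^ b)) ^ i * f p = 0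
    rw [hp]
    exact (zmod_key p.1 b i p.2 hi _).mpr ⟨g p, rfl⟩
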